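/- Fix n ≥ 1 and λ with 0 < λ ≤ 1/2. Then binary randomized response RR_λ satisfies the tight privacy bound e^ε = (1 − λ)/λ: (a) for all neighboring x, x' : Fin n → Bool (d(x,x') = 1) and all y : Fin n → Bool, (RR_λ(x))(y) ≤ ENNReal.ofReal ((1 − λ)/λ) · (RR_λ(x'))(y); and (b) there exist neighboring x, x' and an output y with (RR_λ(x))(y) = ENNReal.ofReal ((1 − λ)/λ) · (RR_λ(x'))(y). Equivalently, the supremum over all neighboring triples of the likelihood ratio (RR_λ(x))(y) / (RR_λ(x'))(y) equals ENNReal.ofReal ((1 − λ)/λ). -/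

import Mathlib

/-- `n` independent Bernoulli(`lam`) coin flips, as an `n`-fold monadic bind in the
`PMF` monad. -/
noncomputable def coins (lam : ℝ) (h1 : lam ≤ 1) : (n : ℕ) → PMF (Fin n → Bool)
  | 0 => PMF.pure fun _ => false
  | n + 1 =>
      (PMF.bernoulli (Real.toNNReal lam) (Real.toNNReal_le_one.mpr h1)).bind fun b =>
        (coins lam h1 n).bind fun rest => PMF.pure (Fin.cons b rest)

/-- Binary randomized response with flip probability `lam`. -/
noncomputable def RR (n : ℕ) (lam : ℝ) (h1 : lam ≤ 1) (x : Fin n → Bool) :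
    PMF (Fin n → Bool) :=
  (coins lam h1 n).map fun θ i => xor (x i) (θ i)

/-- Hamming distance between two Boolean vectors. -/
def hamm {n : ℕ} (x y : Fin n → Bool) : ℕ :=
  (Finset.univ.filter fun i => x i ≠ y i).card

lemma coins_apply (lam : ℝ) (h1 : lam ≤ 1) :
    ∀ (n : ℕ) (θ : Fin n → Bool), coins lam h1 n θ =
      ∏ i, (bif θ i then ENNReal.ofReal lam else 1 - ENNReal.ofReal lam)
  | 0, θ => by
      simp [coins, Subsingleton.elim θ (fun _ => false)]
  | n + 1, θ => by
      rw [← Fin.cons_self_tail θ]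
      rw [coins, PMF.bind_apply, tsum_bool]
      have key : ∀ b : Bool, ((coins lam h1 n).bind fun rest => PMF.pure (Fin.cons b rest))
          (Fin.cons (θ 0) (Fin.tail θ)) =
          if b = θ 0 then coins lam h1 n (Fin.tail θ) else 0 := by
        intro b
        rw [PMF.bind_apply]
        by_cases hb : b = θ 0
        · subst hb
          rw [if_pos rfl]
          rw [tsum_eq_single (Fin.tail θ)]
          · simp
          · intro r hr
            simp only [PMF.pure_apply, mul_ite, mul_one, mul_zero, ite_eq_right_iff]
            intro h
            exact absurd (Fin.cons_inj.mp h).2.symm hr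
        · rw [if_neg hb]
          apply ENNReal.tsum_eq_zero.mpr -- maybe
          intro r
          simp only [PMF.pure_apply, mul_ite, mul_one, mul_zero, ite_eq_right_iff]
          intro h
          exact absurd (Fin.cons_inj.mp h).1.symm hb
      rw [key, key]
      rw [coins_apply lam h1 n (Fin.tail θ)]
      rw [Fin.prod_univ_succ]
      simp [PMF.bernoulli_apply, Fin.tail]
      cases h : θ 0 <;> simp [h, mul_comm] <;> rfl

lemma RR_apply (n : ℕ) (lam : ℝ) (h1 : lam ≤ 1) (x y : Fin n → Bool) :
    RR n lam h1 x y =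
      ∏ i, (bif xor (x i) (y i) then ENNReal.ofReal lam else 1 - ENNReal.ofReal lam) := by
  rw [RR, PMF.map_apply]
  rw [tsum_eq_single (fun i => xor (x i) (y i))]
  · rw [if_pos (by funext i; simp only []; cases x i <;> cases y i <;> rfl)]
    rw [coins_apply]
  · intro θ hθ
    rw [if_neg]
    intro h
    apply hθ
    funext i
    have := congrFun h i
    cases x i <;> cases y i <;> cases θ i <;> simp_all


/-- Tight privacy bound for binary randomized response with `0 < λ ≤ 1/2` and
`n ≥ 1`: (a) the `e^ε = (1-λ)/λ` DP bound holds for all neighboring inputs and all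
outputs; (b) it is attained; equivalently, the supremum of the neighboring
likelihood ratios equals `(1-λ)/λ`. -/
theorem RR_tight_privacy_bound (n : ℕ) (hn : 1 ≤ n) (lam : ℝ)
    (h0 : 0 < lam) (h2 : lam ≤ 1 / 2) (h1 : lam ≤ 1) :
    (∀ x x' y : Fin n → Bool, hamm x x' = 1 →
      RR n lam h1 x y ≤ ENNReal.ofReal ((1 - lam) / lam) * RR n lam h1 x' y) ∧
    (∃ x x' y : Fin n → Bool, hamm x x' = 1 ∧
      RR n lam h1 x y = ENNReal.ofReal ((1 - lam) / lam) * RR n lam h1 x' y) ∧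
    (⨆ (x : Fin n → Bool) (x' : Fin n → Bool) (y : Fin n → Bool) (_ : hamm x x' = 1),
        RR n lam h1 x y / RR n lam h1 x' y) = ENNReal.ofReal ((1 - lam) / lam) := by
  have hM : (1 : ENNReal) - ENNReal.ofReal lam = ENNReal.ofReal (1 - lam) := by
    rw [ENNReal.ofReal_sub 1 h0.le, ENNReal.ofReal_one]
  have hL0 : ENNReal.ofReal lam ≠ 0 := (ENNReal.ofReal_pos.mpr h0).ne'
  have hLt : ENNReal.ofReal lam ≠ ⊤ := ENNReal.ofReal_ne_top
  have hM0 : ENNReal.ofReal (1 - lam) ≠ 0 :=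
    (ENNReal.ofReal_pos.mpr (by linarith)).ne'
  have hMt : ENNReal.ofReal (1 - lam) ≠ ⊤ := ENNReal.ofReal_ne_top
  have hLM : ENNReal.ofReal lam ≤ ENNReal.ofReal (1 - lam) :=
    ENNReal.ofReal_le_ofReal (by linarith)
  have hbound : ENNReal.ofReal ((1 - lam) / lam)
      = ENNReal.ofReal (1 - lam) / ENNReal.ofReal lam :=
    ENNReal.ofReal_div_of_pos h0
  have RRapp : ∀ x y : Fin n → Bool, RR n lam h1 x y =
      ∏ i, (bif xor (x i) (y i) then ENNReal.ofReal lam else ENNReal.ofReal (1 - lam)) := by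
    intro x y
    rw [RR_apply]
    simp only [hM]
  -- single-coordinate ratio bound
  have key : ∀ a b : Bool, a ≠ b →
      (bif a then ENNReal.ofReal lam else ENNReal.ofReal (1 - lam)) ≤
        ENNReal.ofReal (1 - lam) / ENNReal.ofReal lam *
          (bif b then ENNReal.ofReal lam else ENNReal.ofReal (1 - lam)) := by
    intro a b hab
    cases a <;> cases b <;> simp only [Bool.cond_false, Bool.cond_true]
    · exact absurd rfl hab
    · -- M ≤ M / L * L
      rw [ENNReal.div_mul_cancel hL0 hLt]
    · -- L ≤ M / L * M
      calc ENNReal.ofReal lam ≤ ENNReal.ofReal (1 - lam) := hLM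
        _ = 1 * ENNReal.ofReal (1 - lam) := (one_mul _).symm
        _ ≤ _ := by
            apply mul_le_mul_left
            rw [ENNReal.le_div_iff_mul_le (Or.inl hL0) (Or.inl hLt), one_mul]
            exact hLM
    · exact absurd rfl hab
  -- part (a)
  have parta : ∀ x x' y : Fin n → Bool, hamm x x' = 1 →
      RR n lam h1 x y ≤ ENNReal.ofReal ((1 - lam) / lam) * RR n lam h1 x' y := by
    intro x x' y hxx
    obtain ⟨i0, hi0⟩ := Finset.card_eq_one.mp hxx
    have hx : ∀ i : Fin n, x i ≠ x' i ↔ i = i0 := by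
      intro i
      rw [← Finset.mem_singleton, ← hi0, Finset.mem_filter]
      simp
    rw [hbound, RRapp, RRapp]
    rw [← Finset.mul_prod_erase Finset.univ _ (Finset.mem_univ i0),
        ← Finset.mul_prod_erase Finset.univ _ (Finset.mem_univ i0)]
    have hrest : ∀ i ∈ Finset.univ.erase i0,
        (bif xor (x i) (y i) then ENNReal.ofReal lam else ENNReal.ofReal (1 - lam)) =
          (bif xor (x' i) (y i) then ENNReal.ofReal lam else ENNReal.ofReal (1 - lam)) := by
      intro i hi
      have : x i = x' i := by
        by_contra hne
        exact (Finset.ne_of_mem_erase hi) ((hx i).mp hne)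
      rw [this]
    rw [Finset.prod_congr rfl hrest, ← mul_assoc]
    apply mul_le_mul_left
    apply key
    have hne : x i0 ≠ x' i0 := (hx i0).mpr rfl
    cases hxi : x i0 <;> cases hxi' : x' i0 <;> cases y i0 <;> simp_all
  -- explicit witness
  have main : ∃ x x' y : Fin n → Bool, hamm x x' = 1 ∧
      RR n lam h1 x y = ENNReal.ofReal ((1 - lam) / lam) * RR n lam h1 x' y ∧
      RR n lam h1 x' y ≠ 0 := by
    refine ⟨fun i => decide (i = (⟨0, hn⟩ : Fin n)), fun _ => false,
      fun i => decide (i = (⟨0, hn⟩ : Fin n)), ?_, ?_, ?_⟩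
    · show (Finset.univ.filter fun i =>
        (decide (i = (⟨0, hn⟩ : Fin n)) : Bool) ≠ false).card = 1
      rw [show (Finset.univ.filter fun i =>
          (decide (i = (⟨0, hn⟩ : Fin n)) : Bool) ≠ false) = {(⟨0, hn⟩ : Fin n)} by
        ext i; simp]
      exact Finset.card_singleton _
    · have hxy : RR n lam h1 (fun i => decide (i = (⟨0, hn⟩ : Fin n)))
          (fun i => decide (i = (⟨0, hn⟩ : Fin n))) = ENNReal.ofReal (1 - lam) ^ n := by
        rw [RRapp]
        rw [Finset.prod_congr rfl (fun i _ => by rw [Bool.xor_self])]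
        rw [Finset.prod_const, Finset.card_univ, Fintype.card_fin]
        rfl
      have hx'y : RR n lam h1 (fun _ => false)
          (fun i => decide (i = (⟨0, hn⟩ : Fin n))) =
          ENNReal.ofReal lam * ENNReal.ofReal (1 - lam) ^ (n - 1) := by
        rw [RRapp]
        rw [← Finset.mul_prod_erase Finset.univ _ (Finset.mem_univ (⟨0, hn⟩ : Fin n)),
          Finset.prod_eq_pow_card (b := ENNReal.ofReal (1 - lam)) (fun i hi => by
            simp [Finset.ne_of_mem_erase hi]),
          Finset.card_erase_of_mem (Finset.mem_univ _),
          Finset.card_univ, Fintype.card_fin]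
        simp
      rw [hxy, hx'y, hbound, ← mul_assoc, ENNReal.div_mul_cancel hL0 hLt]
      conv_lhs => rw [show n = (n - 1) + 1 from by omega]
      rw [pow_succ, mul_comm]
    · rw [RRapp]
      rw [Finset.prod_ne_zero_iff]
      intro i _
      cases hdec : decide (i = (⟨0, hn⟩ : Fin n)) <;> simp [hdec, hL0, hM0]
  obtain ⟨x, x', y, hh, heq, hne0⟩ := main
  refine ⟨parta, ⟨x, x', y, hh, heq⟩, ?_⟩
  apply le_antisymm
  · exact iSup_le fun a => iSup_le fun b => iSup_le fun c => iSup_le fun hab =>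
      ENNReal.div_le_of_le_mul (parta a b c hab)
  · have hr : RR n lam h1 x y / RR n lam h1 x' y = ENNReal.ofReal ((1 - lam) / lam) := by
      rw [heq, mul_div_assoc, ENNReal.div_self hne0 (PMF.apply_ne_top _ _), mul_one]
    exact le_iSup_of_le x (le_iSup_of_le x' (le_iSup_of_le y (le_iSup_of_le hh hr.ge)))
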